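/- For every permutation π of [n−1] with d descents, the permutation σ = 1 · π′ of [n] obtained by prepending 1 (where π′ is π with every entry increased by 1) satisfies des(σ) = d and w(σ) = w(π) + d. -/

import Mathlib

/-- Number of descents of a sequence. -/
def desL : List ℕ → ℕ
  | a :: b :: t => (if b < a then 1 else 0) + desL (b :: t)
  | _ => 0

/-- Repeatedly split a sequence just after its maximum element. -/
def splitLeftAux : ℕ → List ℕ → List (List ℕ)
  | 0, _ => []
  | _, [] => []
  | fuel + 1, l =>
    let i := l.idxOf (l.foldr Nat.max 0)
    l.take (i + 1) :: splitLeftAux fuel (l.drop (i + 1))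

def splitLeft (l : List ℕ) : List (List ℕ) := splitLeftAux l.length l

/-- Split a sequence at its minimum element, splitting the left part
repeatedly just after its maximum. -/
def splitAll (l : List ℕ) : List (List ℕ) :=
  let m := l.foldr Nat.min (l.headD 0)
  let i := l.idxOf m
  splitLeft (l.take i) ++ [[m]] ++ [l.drop (i + 1)]

/-- The weight of a sequence of distinct naturals (fuelled version; the fuel
`(length+2)^2` in `weightL` is more than the recursion depth ever needed). -/
def weightAux : ℕ → List ℕ → ℕ
  | 0, _ => 0
  | fuel + 1, l =>
    if l.length ≤ 1 ∨ l.Pairwise (· < ·) then 0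
    else ((splitAll (l ++ [l.foldr Nat.max 0 + 1])).map
      (fun p => desL p + weightAux fuel p)).sum

/-- The weight of a permutation viewed as a sequence. -/
def weightL (l : List ℕ) : ℕ := weightAux ((l.length + 2) ^ 2) l

/-- `l` is a permutation of `[n] = {1,…,n}` written as a sequence. -/
def IsPermList (n : ℕ) (l : List ℕ) : Prop := l.Perm (List.range' 1 n)

/-! ### Auxiliary lemmas -/

lemma nat_max_succ (a b : ℕ) : Nat.max (a + 1) (b + 1) = Nat.max a b + 1 :=
  Nat.succ_max_succ a b

lemma nat_min_succ (a b : ℕ) : Nat.min (a + 1) (b + 1) = Nat.min a b + 1 :=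
  Nat.succ_min_succ a b

lemma le_foldr_max (l : List ℕ) : ∀ x ∈ l, x ≤ l.foldr Nat.max 0 := by
  induction l with
  | nil => simp
  | cons a t ih =>
    intro x hx
    rcases List.mem_cons.1 hx with rfl | hx
    · exact Nat.le_max_left _ _
    · exact le_trans (ih x hx) (Nat.le_max_right _ _)

lemma foldr_max_mem (l : List ℕ) : l.foldr Nat.max 0 = 0 ∨ l.foldr Nat.max 0 ∈ l := by
  induction l with
  | nil => exact Or.inl rfl
  | cons a t ih =>
    rcases Nat.le_total a (t.foldr Nat.max 0) with h | h
    · rw [List.foldr_cons, show Nat.max a (t.foldr Nat.max 0) = t.foldr Nat.max 0 from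
        Nat.max_eq_right h]
      rcases ih with h0 | hm
      · exact Or.inl h0
      · exact Or.inr (List.mem_cons_of_mem _ hm)
    · rw [List.foldr_cons, show Nat.max a (t.foldr Nat.max 0) = a from Nat.max_eq_left h]
      exact Or.inr (List.mem_cons_self)

lemma foldr_min_le_init (l : List ℕ) (a : ℕ) : l.foldr Nat.min a ≤ a := by
  induction l with
  | nil => exact le_refl a
  | cons b t ih => exact le_trans (Nat.min_le_right _ _) ih

lemma foldr_min_le (l : List ℕ) (a : ℕ) : ∀ x ∈ l, l.foldr Nat.min a ≤ x := by
  induction l with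
  | nil => simp
  | cons b t ih =>
    intro x hx
    rcases List.mem_cons.1 hx with rfl | hx
    · exact Nat.min_le_left _ _
    · exact le_trans (Nat.min_le_right _ _) (ih x hx)

lemma foldr_min_mem (l : List ℕ) (a : ℕ) :
    l.foldr Nat.min a = a ∨ l.foldr Nat.min a ∈ l := by
  induction l with
  | nil => exact Or.inl rfl
  | cons b t ih =>
    rcases Nat.le_total b (t.foldr Nat.min a) with h | h
    · rw [List.foldr_cons, show Nat.min b (t.foldr Nat.min a) = b from Nat.min_eq_left h]
      exact Or.inr (List.mem_cons_self)
    · rw [List.foldr_cons, show Nat.min b (t.foldr Nat.min a) = t.foldr Nat.min a from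
        Nat.min_eq_right h]
      rcases ih with h0 | hm
      · exact Or.inl h0
      · exact Or.inr (List.mem_cons_of_mem _ hm)

lemma foldr_min_const (l : List ℕ) (a : ℕ) (h : ∀ x ∈ l, a ≤ x) :
    l.foldr Nat.min a = a := by
  induction l with
  | nil => rfl
  | cons b t ih =>
    rw [List.foldr_cons, ih (fun x hx => h x (List.mem_cons_of_mem _ hx))]
    exact Nat.min_eq_right (h b (List.mem_cons_self))

lemma foldr_min_append_big (l : List ℕ) (a : ℕ) (s : List ℕ)
    (h1 : ∀ x ∈ s, a ≤ x) (h2 : ∀ x ∈ s, ∀ y ∈ l, y ≤ x) :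
    (l ++ s).foldr Nat.min a = l.foldr Nat.min a := by
  induction l with
  | nil => simpa using foldr_min_const s a h1
  | cons b t ih =>
    rw [List.cons_append, List.foldr_cons, List.foldr_cons,
      ih (fun x hx y hy => h2 x hx y (List.mem_cons_of_mem _ hy))]

lemma sorted_of_len_le_one (l : List ℕ) (h : l.length ≤ 1) : l.Pairwise (· < ·) := by
  match l with
  | [] => exact List.Pairwise.nil
  | [a] => exact List.pairwise_singleton _ a
  | a :: b :: t => simp at h

lemma desL_sorted : ∀ (l : List ℕ), l.Pairwise (· < ·) → desL l = 0
  | [], _ => rfl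
  | [_], _ => rfl
  | a :: b :: t, h => by
    have h1 : a < b := (List.pairwise_cons.1 h).1 b (by simp)
    have h2 := desL_sorted (b :: t) (List.pairwise_cons.1 h).2
    simp only [desL, h2, if_neg (Nat.not_lt.2 (le_of_lt h1))]

lemma desL_append : ∀ (l s : List ℕ), s.Pairwise (· < ·) →
    (∀ x ∈ l, ∀ y ∈ s, x < y) → desL (l ++ s) = desL l
  | [], s, hs, _ => by simpa [desL] using desL_sorted s hs
  | [a], s, hs, h => by
    cases s with
    | nil => simp
    | cons y s' =>
      have h1 : ¬ y < a := Nat.not_lt.2 (le_of_lt (h a (by simp) y (by simp)))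
      have h2 : desL (y :: s') = 0 := desL_sorted _ hs
      show desL (a :: y :: s') = desL [a]
      simp only [desL, h2, if_neg h1]
  | a :: b :: t, s, hs, h => by
    have ih : desL (b :: (t ++ s)) = desL (b :: t) :=
      desL_append (b :: t) s hs (fun x hx y hy => h x (List.mem_cons_of_mem _ hx) y hy)
    show desL (a :: b :: (t ++ s)) = desL (a :: b :: t)
    simp only [desL, ih]

lemma desL_map : ∀ (l : List ℕ), desL (l.map (· + 1)) = desL l
  | [] => rfl
  | [_] => rfl
  | a :: b :: t => by
    have ih := desL_map (b :: t)
    simp only [List.map_cons] at ih ⊢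
    simp only [desL, ih]
    congr 1
    by_cases h : b < a
    · rw [if_pos h, if_pos (by omega)]
    · rw [if_neg h, if_neg (by omega)]

lemma sorted_map_succ (l : List ℕ) :
    (l.map (· + 1)).Pairwise (· < ·) ↔ l.Pairwise (· < ·) := by
  rw [List.pairwise_map]
  constructor
  · exact fun h => h.imp (fun hab => by omega)
  · exact fun h => h.imp (fun hab => by omega)

lemma weightAux_of_short (f : ℕ) (l : List ℕ) (h : l.length ≤ 1) :
    weightAux f l = 0 := by
  cases f with
  | zero => rfl
  | succ f => simp only [weightAux]; exact if_pos (Or.inl h)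

lemma weightAux_of_sorted (f : ℕ) (l : List ℕ) (h : l.Pairwise (· < ·)) :
    weightAux f l = 0 := by
  cases f with
  | zero => rfl
  | succ f => simp only [weightAux]; exact if_pos (Or.inr h)

lemma length_le_of_mem_splitLeftAux :
    ∀ (f : ℕ) (t p : List ℕ), p ∈ splitLeftAux f t → p.length ≤ t.length
  | 0, t, p => by simp [splitLeftAux]
  | f + 1, [], p => by simp [splitLeftAux]
  | f + 1, a :: t, p => by
    intro hp
    simp only [splitLeftAux, List.mem_cons] at hp
    rcases hp with rfl | hp
    · simp [List.length_take]
    · have := length_le_of_mem_splitLeftAux f _ p hp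
      rw [List.length_drop] at this
      omega

lemma foldr_max_map_succ : ∀ (l : List ℕ), l ≠ [] →
    (l.map (· + 1)).foldr Nat.max 0 = l.foldr Nat.max 0 + 1
  | [a], _ => by
    show Nat.max (a + 1) 0 = Nat.max a 0 + 1
    rw [show Nat.max (a + 1) 0 = a + 1 from Nat.max_zero _,
      show Nat.max a 0 = a from Nat.max_zero _]
  | a :: b :: t, _ => by
    have ih := foldr_max_map_succ (b :: t) (by simp)
    simp only [List.map_cons, List.foldr_cons] at ih ⊢
    rw [ih, nat_max_succ]

lemma foldr_min_map_succ : ∀ (l : List ℕ) (a : ℕ),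
    (l.map (· + 1)).foldr Nat.min (a + 1) = l.foldr Nat.min a + 1
  | [], a => rfl
  | b :: t, a => by
    simp only [List.map_cons, List.foldr_cons]
    rw [foldr_min_map_succ t a, nat_min_succ]

lemma indexOf_map_succ : ∀ (l : List ℕ) (a : ℕ),
    (l.map (· + 1)).idxOf (a + 1) = l.idxOf a
  | [], a => rfl
  | b :: t, a => by
    simp only [List.map_cons]
    by_cases h : b = a
    · subst h
      rw [List.idxOf_cons_self, List.idxOf_cons_self]
    · rw [List.idxOf_cons_ne _ (by omega : (b : ℕ) + 1 ≠ a + 1),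
        List.idxOf_cons_ne _ h, indexOf_map_succ t a]

lemma splitLeftAux_map : ∀ (f : ℕ) (t : List ℕ),
    splitLeftAux f (t.map (· + 1)) = (splitLeftAux f t).map (List.map (· + 1))
  | 0, t => by cases t <;> rfl
  | f + 1, [] => rfl
  | f + 1, a :: t => by
    show splitLeftAux (f + 1) ((a :: t).map (· + 1)) = _
    rw [show (a :: t).map (· + 1) = (a + 1) :: t.map (· + 1) from rfl]
    simp only [splitLeftAux]
    rw [show (a + 1) :: t.map (· + 1) = (a :: t).map (· + 1) from rfl]
    rw [foldr_max_map_succ (a :: t) (by simp), indexOf_map_succ,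
      ← List.map_take, ← List.map_drop, splitLeftAux_map f]
    simp

lemma splitLeft_map (l : List ℕ) :
    splitLeft (l.map (· + 1)) = (splitLeft l).map (List.map (· + 1)) := by
  unfold splitLeft
  rw [List.length_map]
  exact splitLeftAux_map _ _

lemma splitAll_map (l : List ℕ) (hl : l ≠ []) :
    splitAll (l.map (· + 1)) = (splitAll l).map (List.map (· + 1)) := by
  obtain ⟨a, t, rfl⟩ : ∃ a t, l = a :: t := by
    cases l with
    | nil => exact absurd rfl hl
    | cons a t => exact ⟨a, t, rfl⟩
  have hm : ((a :: t).map (· + 1)).foldr Nat.min (((a :: t).map (· + 1)).headD 0)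
      = (a :: t).foldr Nat.min ((a :: t).headD 0) + 1 := by
    rw [show ((a :: t).map (· + 1)).headD 0 = a + 1 from rfl,
      show (a :: t).headD 0 = a from rfl]
    exact foldr_min_map_succ (a :: t) a
  simp only [splitAll]
  rw [hm, indexOf_map_succ, ← List.map_take, ← List.map_drop, splitLeft_map]
  simp

lemma weightAux_map_succ : ∀ (f : ℕ) (l : List ℕ),
    weightAux f (l.map (· + 1)) = weightAux f l := by
  intro f
  induction f with
  | zero => intro l; rfl
  | succ f ih =>
    intro l
    simp only [weightAux, List.length_map]
    by_cases h : l.length ≤ 1 ∨ l.Pairwise (· < ·)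
    · rw [if_pos, if_pos h]
      exact h.imp id (sorted_map_succ l).2
    · rw [if_neg, if_neg h]
      · have hl : l ≠ [] := by
          intro hnil; subst hnil; exact h (Or.inl (by simp))
        rw [foldr_max_map_succ l hl]
        rw [show l.map (· + 1) ++ [l.foldr Nat.max 0 + 1 + 1]
            = (l ++ [l.foldr Nat.max 0 + 1]).map (· + 1) by simp]
        rw [splitAll_map _ (by simp), List.map_map]
        apply congrArg List.sum
        apply List.map_congr_left
        intro p hp
        simp only [Function.comp_apply]
        rw [desL_map, ih]
      · intro hc
        exact h (hc.imp id (sorted_map_succ l).1)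

lemma splitAll_big (l s : List ℕ) (hl : l ≠ [])
    (hbig : ∀ x ∈ s, l.foldr Nat.max 0 < x) :
    splitAll (l ++ s)
      = splitLeft (l.take (l.idxOf (l.foldr Nat.min (l.headD 0))))
        ++ [[l.foldr Nat.min (l.headD 0)]]
        ++ [l.drop (l.idxOf (l.foldr Nat.min (l.headD 0)) + 1) ++ s] := by
  obtain ⟨a, t, rfl⟩ : ∃ a t, l = a :: t := by
    cases l with
    | nil => exact absurd rfl hl
    | cons a t => exact ⟨a, t, rfl⟩
  set l := a :: t with hldef
  have hmem : l.foldr Nat.min (l.headD 0) ∈ l := by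
    rcases foldr_min_mem l a with h | h
    · rw [show l.headD 0 = a from rfl, h]; exact List.mem_cons_self
    · rw [show l.headD 0 = a from rfl]; exact h
  have hmin : (l ++ s).foldr Nat.min ((l ++ s).headD 0)
      = l.foldr Nat.min (l.headD 0) := by
    rw [show (l ++ s).headD 0 = a from rfl, show l.headD 0 = a from rfl]
    refine foldr_min_append_big l a s (fun x hx => ?_) (fun x hx y hy => ?_)
    · exact le_of_lt (lt_of_le_of_lt (le_foldr_max l a (List.mem_cons_self)) (hbig x hx))
    · exact le_of_lt (lt_of_le_of_lt (le_foldr_max l y hy) (hbig x hx))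
  have hidx : (l ++ s).idxOf (l.foldr Nat.min (l.headD 0))
      = l.idxOf (l.foldr Nat.min (l.headD 0)) :=
    List.idxOf_append_of_mem hmem
  have hlt : l.idxOf (l.foldr Nat.min (l.headD 0)) < l.length :=
    List.idxOf_lt_length_iff.2 hmem
  simp only [splitAll]
  rw [hmin, hidx, List.take_append_of_le_length (le_of_lt hlt),
    List.drop_append_of_le_length hlt]

/-- The key lemma: the weight of a list followed by a sorted tail of entries
larger than everything in the list does not depend on the tail (nor on the
fuel, provided it is at least `length + 1`). -/
lemma weightAux_eq_of_bigs : ∀ (n : ℕ) (l s₁ s₂ : List ℕ) (f₁ f₂ : ℕ),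
    l.length ≤ n → l.length + 1 ≤ f₁ → l.length + 1 ≤ f₂ →
    s₁.Pairwise (· < ·) → s₂.Pairwise (· < ·) →
    (∀ x ∈ s₁, l.foldr Nat.max 0 < x) → (∀ x ∈ s₂, l.foldr Nat.max 0 < x) →
    weightAux f₁ (l ++ s₁) = weightAux f₂ (l ++ s₂) := by
  intro n
  induction n with
  | zero =>
    intro l s₁ s₂ f₁ f₂ hn _ _ hs₁ hs₂ _ _
    have : l = [] := List.length_eq_zero_iff.1 (Nat.le_zero.1 hn)
    subst this
    rw [List.nil_append, List.nil_append, weightAux_of_sorted _ _ hs₁,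
      weightAux_of_sorted _ _ hs₂]
  | succ n ih =>
    intro l s₁ s₂ f₁ f₂ hn hf₁ hf₂ hs₁ hs₂ hb₁ hb₂
    have hcross₁ : ∀ x ∈ l, ∀ y ∈ s₁, x < y :=
      fun x hx y hy => lt_of_le_of_lt (le_foldr_max l x hx) (hb₁ y hy)
    have hcross₂ : ∀ x ∈ l, ∀ y ∈ s₂, x < y :=
      fun x hx y hy => lt_of_le_of_lt (le_foldr_max l x hx) (hb₂ y hy)
    by_cases hsl : l.Pairwise (· < ·)
    · rw [weightAux_of_sorted _ _ (List.pairwise_append.2 ⟨hsl, hs₁, hcross₁⟩),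
        weightAux_of_sorted _ _ (List.pairwise_append.2 ⟨hsl, hs₂, hcross₂⟩)]
    · have hl2 : 2 ≤ l.length := by
        by_contra h
        exact hsl (sorted_of_len_le_one l (by omega))
      have hlne : l ≠ [] := by
        intro h; subst h; simp at hl2
    -- peel the fuels
      obtain ⟨g₁, rfl⟩ : ∃ g, f₁ = g + 1 := ⟨f₁ - 1, by omega⟩
      obtain ⟨g₂, rfl⟩ : ∃ g, f₂ = g + 1 := ⟨f₂ - 1, by omega⟩
      have hcond : ∀ s : List ℕ, s.Pairwise (· < ·) → (∀ x ∈ l, ∀ y ∈ s, x < y) →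
          ¬((l ++ s).length ≤ 1 ∨ (l ++ s).Pairwise (· < ·)) := by
        intro s hs hcr hc
        rcases hc with hc | hc
        · rw [List.length_append] at hc; omega
        · exact hsl (List.pairwise_append.1 hc).1
      simp only [weightAux]
      rw [if_neg (hcond s₁ hs₁ hcross₁), if_neg (hcond s₂ hs₂ hcross₂)]
      -- analyze each side
      have key : ∀ (s : List ℕ), s.Pairwise (· < ·) → (∀ x ∈ s, l.foldr Nat.max 0 < x) →
          ∀ (g : ℕ), l.length ≤ g →
          ((splitAll (l ++ s ++ [(l ++ s).foldr Nat.max 0 + 1])).map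
            (fun p => desL p + weightAux g p)).sum
          = ((splitLeft (l.take (l.idxOf (l.foldr Nat.min (l.headD 0))))).map
              (fun p => desL p + weightAux g p)).sum
            + (desL (l.drop (l.idxOf (l.foldr Nat.min (l.headD 0)) + 1))
              + weightAux g (l.drop (l.idxOf (l.foldr Nat.min (l.headD 0)) + 1)
                  ++ (s ++ [(l ++ s).foldr Nat.max 0 + 1]))) := by
        intro s hs hbs g hg
        set M := (l ++ s).foldr Nat.max 0 + 1 with hM
        have hMbig : ∀ x ∈ l ++ s, x < M :=
          fun x hx => lt_of_le_of_lt (le_foldr_max _ x hx) (Nat.lt_succ_self _)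
        have hs' : (s ++ [M]).Pairwise (· < ·) := by
          refine List.pairwise_append.2 ⟨hs, List.pairwise_singleton _ M, ?_⟩
          intro x hx y hy
          rw [List.mem_singleton] at hy; subst hy
          exact hMbig x (List.mem_append_right l hx)
        have hbs' : ∀ x ∈ s ++ [M], l.foldr Nat.max 0 < x := by
          intro x hx
          rcases List.mem_append.1 hx with hx | hx
          · exact hbs x hx
          · rw [List.mem_singleton] at hx; subst hx
            rcases foldr_max_mem l with h0 | hm
            · rw [h0]; omega
            · exact lt_of_le_of_lt
                (le_foldr_max (l ++ s) _ (List.mem_append_left s hm)) (Nat.lt_succ_self _)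
        rw [List.append_assoc, splitAll_big l (s ++ [M]) hlne hbs']
        set i := l.idxOf (l.foldr Nat.min (l.headD 0)) with hi
        set m := l.foldr Nat.min (l.headD 0) with hm
        simp only [List.map_append, List.sum_append, List.map_cons, List.sum_cons,
          List.map_nil, List.sum_nil]
        have h1 : desL [m] = 0 := rfl
        have h2 : weightAux g [m] = 0 := weightAux_of_short _ _ (by simp)
        have h3 : desL (l.drop (i + 1) ++ (s ++ [M])) = desL (l.drop (i + 1)) := by
          refine desL_append _ _ hs' ?_
          intro x hx y hy
          exact lt_of_le_of_lt (le_foldr_max l x (List.mem_of_mem_drop hx)) (hbs' y hy)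
        rw [h1, h2, h3]
        omega
      have hmem : l.foldr Nat.min (l.headD 0) ∈ l := by
        obtain ⟨a, t, rfl⟩ : ∃ a t, l = a :: t := by
          cases l with
          | nil => exact absurd rfl hlne
          | cons a t => exact ⟨a, t, rfl⟩
        rcases foldr_min_mem (a :: t) a with h | h
        · rw [show (a :: t).headD 0 = a from rfl, h]; exact List.mem_cons_self
        · rw [show (a :: t).headD 0 = a from rfl]; exact h
      have hlt : l.idxOf (l.foldr Nat.min (l.headD 0)) < l.length :=
        List.idxOf_lt_length_iff.2 hmem
      rw [key s₁ hs₁ hb₁ g₁ (by omega), key s₂ hs₂ hb₂ g₂ (by omega)]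
      set i := l.idxOf (l.foldr Nat.min (l.headD 0)) with hi
      -- the splitLeft parts agree
      have hpieces : ((splitLeft (l.take i)).map (fun p => desL p + weightAux g₁ p)).sum
          = ((splitLeft (l.take i)).map (fun p => desL p + weightAux g₂ p)).sum := by
        apply congrArg List.sum
        apply List.map_congr_left
        intro p hp
        have hpl : p.length ≤ i := by
          have := length_le_of_mem_splitLeftAux _ _ p hp
          rw [List.length_take] at this
          omega
        have hpw : weightAux g₁ (p ++ []) = weightAux g₂ (p ++ []) :=
          ih p [] [] g₁ g₂ (by omega) (by omega) (by omega)
            List.Pairwise.nil List.Pairwise.nil (by simp) (by simp)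
        rw [List.append_nil] at hpw
        rw [hpw]
      -- the tails agree
      have htails : weightAux g₁ (l.drop (i + 1) ++ (s₁ ++ [(l ++ s₁).foldr Nat.max 0 + 1]))
          = weightAux g₂ (l.drop (i + 1) ++ (s₂ ++ [(l ++ s₂).foldr Nat.max 0 + 1])) := by
        have hdlen : (l.drop (i + 1)).length = l.length - (i + 1) := List.length_drop
        have hbig' : ∀ (s : List ℕ), (∀ x ∈ s, l.foldr Nat.max 0 < x) →
            ∀ x ∈ s ++ [(l ++ s).foldr Nat.max 0 + 1],
              (l.drop (i + 1)).foldr Nat.max 0 < x := by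
          intro s hbs x hx
          have hxl : l.foldr Nat.max 0 < x := by
            rcases List.mem_append.1 hx with hx | hx
            · exact hbs x hx
            · rw [List.mem_singleton] at hx; subst hx
              rcases foldr_max_mem l with h0 | hm
              · rw [h0]; omega
              · exact lt_of_le_of_lt
                  (le_foldr_max (l ++ s) _ (List.mem_append_left s hm)) (Nat.lt_succ_self _)
          rcases foldr_max_mem (l.drop (i + 1)) with h0 | hm
          · rw [h0]; omega
          · exact lt_of_le_of_lt (le_foldr_max l _ (List.mem_of_mem_drop hm)) hxl
        have hsortM : ∀ (s : List ℕ), s.Pairwise (· < ·) → (∀ x ∈ s, l.foldr Nat.max 0 < x) →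
            (s ++ [(l ++ s).foldr Nat.max 0 + 1]).Pairwise (· < ·) := by
          intro s hs hbs
          refine List.pairwise_append.2 ⟨hs, List.pairwise_singleton _ _, ?_⟩
          intro x hx y hy
          rw [List.mem_singleton] at hy; subst hy
          exact lt_of_le_of_lt (le_foldr_max (l ++ s) x (List.mem_append_right l hx))
            (Nat.lt_succ_self _)
        exact ih (l.drop (i + 1)) _ _ g₁ g₂ (by omega) (by omega) (by omega)
          (hsortM s₁ hs₁ hb₁) (hsortM s₂ hs₂ hb₂) (hbig' s₁ hb₁) (hbig' s₂ hb₂)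
      rw [hpieces, htails]

/-- Prepending `1` (after shifting all entries up by `1`) to a permutation `π`
of `[m]` with `d` descents yields a permutation with `d` descents and weight
`w(π) + d`. -/
theorem weight_prepend_one (m d : ℕ) (π : List ℕ) (hperm : IsPermList m π)
    (hd : desL π = d) :
    desL (1 :: π.map (· + 1)) = d ∧
      weightL (1 :: π.map (· + 1)) = weightL π + d := by
  have hlen : π.length = m := by simpa using hperm.length_eq
  have hmem : ∀ x ∈ π, 1 ≤ x := by
    intro x hx
    have hx' := hperm.mem_iff.1 hx
    rw [List.mem_range'_1] at hx'
    omega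
  have hdes : desL (1 :: π.map (· + 1)) = d := by
    cases π with
    | nil => simpa [desL] using hd
    | cons a t =>
      have hdm : desL ((a :: t).map (· + 1)) = d := by rw [desL_map]; exact hd
      simp only [List.map_cons] at hdm ⊢
      show (if a + 1 < 1 then 1 else 0) + desL ((a + 1) :: t.map (· + 1)) = d
      rw [if_neg (by omega), Nat.zero_add]
      exact hdm
  refine ⟨hdes, ?_⟩
  by_cases hsort : π.Pairwise (· < ·)
  · have hσ : (1 :: π.map (· + 1)).Pairwise (· < ·) := by
      rw [List.pairwise_cons]
      constructor
      · intro b hb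
        obtain ⟨x, hx, rfl⟩ := List.mem_map.1 hb
        have := hmem x hx; omega
      · exact (sorted_map_succ π).2 hsort
    rw [weightL, weightL, weightAux_of_sorted _ _ hσ, weightAux_of_sorted _ _ hsort]
    rw [← hd, desL_sorted _ hsort]
  · -- main case
    have hπne : π ≠ [] := by
      intro h; subst h; exact hsort List.Pairwise.nil
    set σ : List ℕ := 1 :: π.map (· + 1) with hσdef
    have hσlen : σ.length = π.length + 1 := by simp [hσdef]
    have hσsort : ¬ σ.Pairwise (· < ·) := by
      intro h
      exact hsort ((sorted_map_succ π).1 (List.pairwise_cons.1 h).2)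
    have hσlen2 : 2 ≤ σ.length := by
      rw [hσlen]
      cases π with
      | nil => exact absurd rfl hπne
      | cons a t => simp
    obtain ⟨K, hK⟩ : ∃ K, (σ.length + 2) ^ 2 = K + 1 :=
      ⟨(σ.length + 2) ^ 2 - 1, (Nat.succ_pred_eq_of_pos (by positivity)).symm⟩
    set M := σ.foldr Nat.max 0 + 1 with hM
    have hMbig : ∀ x ∈ σ, x < M :=
      fun x hx => lt_of_le_of_lt (le_foldr_max _ x hx) (Nat.lt_succ_self _)
    have hmin : (σ ++ [M]).foldr Nat.min ((σ ++ [M]).headD 0) = 1 := by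
      rw [show (σ ++ [M]).headD 0 = 1 from rfl]
      refine foldr_min_const _ _ ?_
      intro x hx
      rcases List.mem_append.1 hx with hx | hx
      · rcases List.mem_cons.1 hx with rfl | hx
        · exact le_refl 1
        · obtain ⟨y, hy, rfl⟩ := List.mem_map.1 hx; omega
      · rw [List.mem_singleton] at hx; omega
    have hidx : (σ ++ [M]).idxOf 1 = 0 := by
      rw [show σ ++ [M] = 1 :: (π.map (· + 1) ++ [M]) from rfl]
      exact List.idxOf_cons_self
    have hsa : splitAll (σ ++ [M]) = [[1], π.map (· + 1) ++ [M]] := by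
      simp only [splitAll]
      rw [hmin, hidx]
      rw [show (σ ++ [M]).take 0 = [] from rfl]
      rw [show splitLeft [] = [] from rfl]
      rw [show (σ ++ [M]).drop 1 = π.map (· + 1) ++ [M] from rfl]
      rfl
    have hcond : ¬(σ.length ≤ 1 ∨ σ.Pairwise (· < ·)) := by
      intro h
      rcases h with h | h
      · omega
      · exact hσsort h
    have hstep : weightL σ = desL (π.map (· + 1) ++ [M]) + weightAux K (π.map (· + 1) ++ [M]) := by
      rw [weightL, hK]
      simp only [weightAux]
      rw [if_neg hcond, ← hM, hsa]
      simp only [List.map_cons, List.map_nil, List.sum_cons, List.sum_nil]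
      have h1 : desL [1] = 0 := rfl
      have h2 : weightAux K [1] = 0 := weightAux_of_short _ _ (by simp)
      rw [h1, h2]
      omega
    have hbigM : ∀ x ∈ [M], (π.map (· + 1)).foldr Nat.max 0 < x := by
      intro x hx
      rw [List.mem_singleton] at hx; subst hx
      rcases foldr_max_mem (π.map (· + 1)) with h0 | hm
      · rw [h0]; omega
      · exact lt_of_le_of_lt
          (le_foldr_max σ _ (List.mem_cons_of_mem 1 hm)) (Nat.lt_succ_self _)
    have hdtail : desL (π.map (· + 1) ++ [M]) = d := by
      rw [desL_append _ _ (List.pairwise_singleton _ M)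
        (fun x hx y hy => by
          rw [List.mem_singleton] at hy; subst hy
          exact hMbig x (List.mem_cons_of_mem 1 hx)),
        desL_map]
      exact hd
    have hfuel1 : (π.map (· + 1)).length + 1 ≤ K := by
      have h1 : σ.length + 2 ≤ (σ.length + 2) ^ 2 := Nat.le_self_pow (by norm_num) _
      rw [List.length_map]
      omega
    have hfuel2 : (π.map (· + 1)).length + 1 ≤ (π.length + 2) ^ 2 := by
      have h1 : π.length + 2 ≤ (π.length + 2) ^ 2 := Nat.le_self_pow (by norm_num) _
      rw [List.length_map]
      omega
    have hwtail : weightAux K (π.map (· + 1) ++ [M]) = weightL π := by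
      have h := weightAux_eq_of_bigs (π.map (· + 1)).length (π.map (· + 1)) [M] []
        K ((π.length + 2) ^ 2) (le_refl _) hfuel1 hfuel2
        (List.pairwise_singleton _ M) List.Pairwise.nil hbigM (by simp)
      rw [List.append_nil] at h
      rw [h, weightAux_map_succ]
      rfl
    rw [hstep, hdtail, hwtail]
    omega
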